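/- For real numbers l, a, b with 0 < b ≤ a and √(a² + b²) < l, the integral ∫_{0}^{π} min(a, l·|cos φ|)·min(b, l·sin φ) dφ equals 2la·(1 − √(1 − b²/l²)) + 2lb·(1 − √(1 − a²/l²)) + 2ab·(arccos(a/l) − arcsin(b/l)). -/

import Mathlib

open Real MeasureTheory Filter

/-- `A(l,a) = ∫_0^π min(a, l·|cos φ|) dφ` -/
noncomputable def A2 (l a : ℝ) : ℝ := ∫ φ in (0:ℝ)..π, min a (l * |Real.cos φ|)

/-- `B(l,b) = ∫_0^π min(b, l·sin φ) dφ` -/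
noncomputable def B2 (l b : ℝ) : ℝ := ∫ φ in (0:ℝ)..π, min b (l * Real.sin φ)

/-- `AB(l,a,b) = ∫_0^π min(a, l·|cos φ|)·min(b, l·sin φ) dφ` -/
noncomputable def AB2 (l a b : ℝ) : ℝ :=
  ∫ φ in (0:ℝ)..π, min a (l * |Real.cos φ|) * min b (l * Real.sin φ)

/-- Intersection probability for the 2D Buffon–Laplace needle problem. -/
noncomputable def P2 (l a b : ℝ) : ℝ :=
  (b * A2 l a + a * B2 l b - AB2 l a b) / (π * a * b)

/-- Intersection probability for the 2D spherocylinder Buffon–Laplace problem. -/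
noncomputable def P2sc (l σ a b : ℝ) : ℝ :=
  ((b - σ) * A2 l (a - σ) + (a - σ) * B2 l (b - σ) - AB2 l (a - σ) (b - σ)
    + (σ * a + σ * b - σ ^ 2) * π) / (π * a * b)

/-- `A³ᴰ(l,a) = ∫_0^{π/2} ∫_0^π min(a, l·sin ψ·|cos φ|) dφ dψ` -/
noncomputable def A3 (l a : ℝ) : ℝ :=
  ∫ ψ in (0:ℝ)..(π/2), ∫ φ in (0:ℝ)..π, min a (l * Real.sin ψ * |Real.cos φ|)

/-- `B³ᴰ(l,b) = ∫_0^{π/2} ∫_0^π min(b, l·sin ψ·sin φ) dφ dψ` -/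
noncomputable def B3 (l b : ℝ) : ℝ :=
  ∫ ψ in (0:ℝ)..(π/2), ∫ φ in (0:ℝ)..π, min b (l * Real.sin ψ * Real.sin φ)

/-- `AB³ᴰ(l,a,b) = ∫_0^{π/2} ∫_0^π min(a, l·sin ψ·|cos φ|)·min(b, l·sin ψ·sin φ) dφ dψ` -/
noncomputable def AB3 (l a b : ℝ) : ℝ :=
  ∫ ψ in (0:ℝ)..(π/2), ∫ φ in (0:ℝ)..π,
    min a (l * Real.sin ψ * |Real.cos φ|) * min b (l * Real.sin ψ * Real.sin φ)

/-- `S³ᴰ(l,a,b) = b·A³ᴰ(l,a) + a·B³ᴰ(l,b) − AB³ᴰ(l,a,b)` -/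
noncomputable def S3 (l a b : ℝ) : ℝ := b * A3 l a + a * B3 l b - AB3 l a b

/-- `F(α,β,t) = ∫_α^β √(sin²ψ − t²) dψ` -/
noncomputable def Faux (α β t : ℝ) : ℝ :=
  ∫ ψ in α..β, Real.sqrt (Real.sin ψ ^ 2 - t ^ 2)

/-- `G(α,β,t) = ∫_α^β (π/2 − arcsin(t / sin ψ)) dψ` -/
noncomputable def Gaux (α β t : ℝ) : ℝ :=
  ∫ ψ in α..β, (π / 2 - Real.arcsin (t / Real.sin ψ))

open Real MeasureTheory Filter Set intervalIntegral in
theorem stmt4' (l a b : ℝ) (hb : 0 < b) (hba : b ≤ a)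
    (hLl : Real.sqrt (a ^ 2 + b ^ 2) < l) :
    (∫ φ in (0:ℝ)..π, min a (l * |Real.cos φ|) * min b (l * Real.sin φ))
      = 2 * l * a * (1 - Real.sqrt (1 - b ^ 2 / l ^ 2))
      + 2 * l * b * (1 - Real.sqrt (1 - a ^ 2 / l ^ 2))
      + 2 * a * b * (Real.arccos (a / l) - Real.arcsin (b / l)) := by
  have hl0 : 0 < l := lt_of_le_of_lt (Real.sqrt_nonneg _) hLl
  have ha : 0 < a := lt_of_lt_of_le hb hba
  have hab2 : a ^ 2 + b ^ 2 < l ^ 2 := by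
    nlinarith [Real.sq_sqrt (show (0:ℝ) ≤ a^2 + b^2 by positivity),
      Real.sqrt_nonneg (a^2+b^2)]
  have hal : a < l := by nlinarith
  have hbl : b < l := by nlinarith
  have hbl1 : b / l ≤ 1 := by rw [div_le_one hl0]; linarith
  have hbl0 : (0:ℝ) ≤ b / l := by positivity
  have hal1 : a / l ≤ 1 := by rw [div_le_one hl0]; linarith
  have hal0 : (0:ℝ) ≤ a / l := by positivity
  set α := Real.arcsin (b/l) with hαdef
  set β := Real.arccos (a/l) with hβdef
  have hsinα : Real.sin α = b / l := Real.sin_arcsin (by linarith) hbl1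
  have hcosα : Real.cos α = Real.sqrt (1 - b^2 / l^2) := by
    rw [hαdef, Real.cos_arcsin, div_pow]
  have hcosβ : Real.cos β = a / l := Real.cos_arccos (by linarith) hal1
  have hsinβ : Real.sin β = Real.sqrt (1 - a^2 / l^2) := by
    rw [hβdef, Real.sin_arccos, div_pow]
  have hα0 : 0 ≤ α := Real.arcsin_nonneg.mpr hbl0
  have hαpi2 : α ≤ π/2 := Real.arcsin_le_pi_div_two _
  have hβ0 : 0 ≤ β := Real.arccos_nonneg _
  have hβpi2 : β ≤ π/2 := Real.arccos_le_pi_div_two.mpr hal0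
  have hl2 : (0:ℝ) < l^2 := by positivity
  have hsum : a^2/l^2 + b^2/l^2 ≤ 1 := by
    rw [← add_div, div_le_one hl2]; linarith
  have hb2nn : (0:ℝ) ≤ b^2/l^2 := by positivity
  have ha2nn : (0:ℝ) ≤ a^2/l^2 := by positivity
  have hbsinβ : b / l ≤ Real.sin β := by
    rw [hsinβ, Real.le_sqrt hbl0, div_pow]
    all_goals linarith
  have hacosα : a / l ≤ Real.cos α := by
    rw [hcosα, Real.le_sqrt hal0, div_pow]
    all_goals linarith
  have hαβ : α ≤ β := by
    have h1 : β = Real.arcsin (Real.sin β) :=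
      (Real.arcsin_sin (by linarith [Real.pi_pos]) hβpi2).symm
    rw [hαdef, h1]
    exact Real.monotone_arcsin hbsinβ
  set f : ℝ → ℝ := fun φ => min a (l * |Real.cos φ|) * min b (l * Real.sin φ) with hfdef
  have hfc : Continuous f := by fun_prop
  have hint : ∀ u v : ℝ, IntervalIntegrable f volume u v :=
    fun u v => hfc.intervalIntegrable u v
  have hpi : (0:ℝ) < π := Real.pi_pos
  -- symmetry
  have hsym : (∫ φ in (π/2:ℝ)..π, f φ) = ∫ φ in (0:ℝ)..(π/2), f φ := by
    have h := intervalIntegral.integral_comp_sub_left (a := 0) (b := π/2) f π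
    have h2 : (∫ x in (0:ℝ)..(π/2), f (π - x)) = ∫ x in (0:ℝ)..(π/2), f x := by
      apply intervalIntegral.integral_congr
      intro x _
      simp only [hfdef, Real.cos_pi_sub, Real.sin_pi_sub, abs_neg]
    rw [h2] at h
    have e1 : π - π/2 = π/2 := by ring
    rw [e1, sub_zero] at h
    exact h.symm
  -- piece 1
  have p1 : (∫ φ in (0:ℝ)..α, f φ) = a * l * (1 - Real.cos α) := by
    have hcongr : Set.EqOn f (fun φ => a * (l * Real.sin φ)) (Set.uIcc 0 α) := by
      intro φ hφ
      rw [Set.uIcc_of_le hα0] at hφ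
      obtain ⟨h1, h2⟩ := hφ
      have hcφ : 0 ≤ Real.cos φ := Real.cos_nonneg_of_mem_Icc ⟨by linarith, by linarith⟩
      have hcαφ : Real.cos α ≤ Real.cos φ :=
        Real.cos_le_cos_of_nonneg_of_le_pi h1 (by linarith) h2
      have hs : Real.sin φ ≤ Real.sin α :=
        Real.strictMonoOn_sin.monotoneOn ⟨by linarith, by linarith⟩
          ⟨by linarith, by linarith⟩ h2
      have hmina : min a (l * |Real.cos φ|) = a := by
        rw [abs_of_nonneg hcφ]
        apply min_eq_left
        have := (div_le_iff₀ hl0).mp (le_trans hacosα hcαφ)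
        linarith [this]
      have hminb : min b (l * Real.sin φ) = l * Real.sin φ := by
        apply min_eq_right
        have : Real.sin φ ≤ b / l := hsinα ▸ hs
        have := (le_div_iff₀ hl0).mp this
        linarith
      simp only [hfdef, hmina, hminb]
    rw [intervalIntegral.integral_congr hcongr]
    rw [intervalIntegral.integral_const_mul, intervalIntegral.integral_const_mul,
      integral_sin]
    simp; ring
  -- piece 2
  have p2 : (∫ φ in α..β, f φ) = a * b * (β - α) := by
    have hcongr : Set.EqOn f (fun _ => a * b) (Set.uIcc α β) := by
      intro φ hφ
      rw [Set.uIcc_of_le hαβ] at hφ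
      obtain ⟨h1, h2⟩ := hφ
      have hcφ : 0 ≤ Real.cos φ :=
        Real.cos_nonneg_of_mem_Icc ⟨by linarith, by linarith⟩
      have hcβφ : Real.cos β ≤ Real.cos φ :=
        Real.cos_le_cos_of_nonneg_of_le_pi (by linarith) (by linarith) h2
      have hs : Real.sin α ≤ Real.sin φ :=
        Real.strictMonoOn_sin.monotoneOn ⟨by linarith, by linarith⟩
          ⟨by linarith, by linarith⟩ h1
      have hmina : min a (l * |Real.cos φ|) = a := by
        rw [abs_of_nonneg hcφ]
        apply min_eq_left
        have : a / l ≤ Real.cos φ := hcosβ ▸ hcβφ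
        have := (div_le_iff₀ hl0).mp this
        linarith
      have hminb : min b (l * Real.sin φ) = b := by
        apply min_eq_left
        have : b / l ≤ Real.sin φ := hsinα ▸ hs
        have := (div_le_iff₀ hl0).mp this
        linarith
      simp only [hfdef, hmina, hminb]
    rw [intervalIntegral.integral_congr hcongr, intervalIntegral.integral_const,
      smul_eq_mul]
    ring
  -- piece 3
  have p3 : (∫ φ in β..(π/2:ℝ), f φ) = l * b * (1 - Real.sin β) := by
    have hcongr : Set.EqOn f (fun φ => (l * b) * Real.cos φ) (Set.uIcc β (π/2)) := by
      intro φ hφ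
      rw [Set.uIcc_of_le hβpi2] at hφ
      obtain ⟨h1, h2⟩ := hφ
      have hcφ : 0 ≤ Real.cos φ :=
        Real.cos_nonneg_of_mem_Icc ⟨by linarith, by linarith⟩
      have hcφβ : Real.cos φ ≤ Real.cos β :=
        Real.cos_le_cos_of_nonneg_of_le_pi hβ0 (by linarith) h1
      have hs : Real.sin β ≤ Real.sin φ :=
        Real.strictMonoOn_sin.monotoneOn ⟨by linarith, by linarith⟩
          ⟨by linarith, by linarith⟩ h1
      have hmina : min a (l * |Real.cos φ|) = l * Real.cos φ := by
        rw [abs_of_nonneg hcφ]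
        apply min_eq_right
        have : Real.cos φ ≤ a / l := hcosβ ▸ hcφβ
        have := (le_div_iff₀ hl0).mp this
        linarith
      have hminb : min b (l * Real.sin φ) = b := by
        apply min_eq_left
        have : b / l ≤ Real.sin φ := le_trans hbsinβ hs
        have := (div_le_iff₀ hl0).mp this
        linarith
      simp only [hfdef, hmina, hminb]
      ring
    rw [intervalIntegral.integral_congr hcongr]
    rw [intervalIntegral.integral_const_mul, integral_cos]
    simp
    try ring
  have half : (∫ φ in (0:ℝ)..(π/2), f φ)
      = a * l * (1 - Real.cos α) + a * b * (β - α) + l * b * (1 - Real.sin β) := by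
    rw [← intervalIntegral.integral_add_adjacent_intervals (hint 0 α) (hint α (π/2)),
      ← intervalIntegral.integral_add_adjacent_intervals (hint α β) (hint β (π/2)),
      p1, p2, p3]
    ring
  have total : (∫ φ in (0:ℝ)..π, f φ)
      = 2 * (a * l * (1 - Real.cos α) + a * b * (β - α) + l * b * (1 - Real.sin β)) := by
    rw [← intervalIntegral.integral_add_adjacent_intervals (hint 0 (π/2)) (hint (π/2) π),
      hsym, half]
    ring
  rw [show (∫ φ in (0:ℝ)..π, min a (l * |Real.cos φ|) * min b (l * Real.sin φ))
      = ∫ φ in (0:ℝ)..π, f φ from rfl, total, hcosα, hsinβ]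
  ring


theorem stmt4 (l a b : ℝ) (hb : 0 < b) (hba : b ≤ a)
    (hLl : Real.sqrt (a ^ 2 + b ^ 2) < l) :
    AB2 l a b = 2 * l * a * (1 - Real.sqrt (1 - b ^ 2 / l ^ 2))
      + 2 * l * b * (1 - Real.sqrt (1 - a ^ 2 / l ^ 2))
      + 2 * a * b * (Real.arccos (a / l) - Real.arcsin (b / l)) :=
  stmt4' l a b hb hba hLl
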